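/- Let H ∈ ℂ^{n×n} be Hermitian and let Π_1,…,Π_d be orthogonal projections with Π_k Π_{k'} = 0 for k ≠ k' and Σ_k Π_k = I. Suppose {1,…,d} = I ∪ J with I, J nonempty and disjoint, and suppose Δ_{k,k'} = tr(Π_k D_H(Π_{k'})) = 0 for all k ∈ I and k' ∈ J (i.e., the graph associated to the Laplacian Δ is disconnected along this partition). Then, setting Π_I = Σ_{k∈I} Π_k and Π_J = Σ_{k∈J} Π_k, the Hamiltonian is block diagonal: H = Π_I H Π_I + Π_J H Π_J. -/
import Mathlib


open Matrix Finset

/-- The dissipation superoperator `D_A(ρ) = AρA† − ½(A†Aρ + ρA†A)`. -/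
noncomputable def Dsup {n : ℕ} (A ρ : Matrix (Fin n) (Fin n) ℂ) : Matrix (Fin n) (Fin n) ℂ :=
  A * ρ * Aᴴ - (1 / 2 : ℂ) • (Aᴴ * A * ρ + ρ * Aᴴ * A)

theorem aux_trace_zero {m p : Type*} [Fintype m] [Fintype p]
    (M : Matrix m p ℂ) (h : (Mᴴ * M).trace = 0) : M = 0 := by
  have h2 : ((∑ j, ∑ i, Complex.normSq (M i j) : ℝ) : ℂ) = 0 := by
    rw [← h]
    push_cast
    simp [Matrix.trace, Matrix.diag, Matrix.mul_apply, Complex.normSq_eq_conj_mul_self]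
  rw [Complex.ofReal_eq_zero] at h2
  ext i j
  have := (Finset.sum_eq_zero_iff_of_nonneg (fun j _ => Finset.sum_nonneg
    (fun i _ => Complex.normSq_nonneg _))).mp h2 j (Finset.mem_univ j)
  have := (Finset.sum_eq_zero_iff_of_nonneg
    (fun i _ => Complex.normSq_nonneg _)).mp this i (Finset.mem_univ i)
  simpa using Complex.normSq_eq_zero.mp this

/-- If the index set `{1,…,d}` splits into two nonempty disjoint parts `I, J`
such that all Laplacian entries `Δ_{k,k'} = tr(Π_k D_H(Π_{k'}))` vanish for `k ∈ I`, `k' ∈ J`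
(disconnected Laplacian graph), then the Hermitian Hamiltonian `H` is block diagonal with
respect to `Π_I = Σ_{k∈I} Π_k` and `Π_J = Σ_{k∈J} Π_k`:
`H = Π_I H Π_I + Π_J H Π_J`. -/
theorem stmt8 {n d : ℕ} (H : Matrix (Fin n) (Fin n) ℂ) (hH : Hᴴ = H)
    (Proj : Fin d → Matrix (Fin n) (Fin n) ℂ)
    (hherm : ∀ k, (Proj k)ᴴ = Proj k)
    (hidem : ∀ k, Proj k * Proj k = Proj k)
    (horth : ∀ k k', k ≠ k' → Proj k * Proj k' = 0)
    (hres : ∑ k, Proj k = 1)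
    (I J : Finset (Fin d)) (hI : I.Nonempty) (hJ : J.Nonempty)
    (hdisj : Disjoint I J) (hcover : I ∪ J = Finset.univ)
    (hzero : ∀ k ∈ I, ∀ k' ∈ J, (Proj k * Dsup H (Proj k')).trace = 0) :
    H = (∑ k ∈ I, Proj k) * H * (∑ k ∈ I, Proj k)
        + (∑ k ∈ J, Proj k) * H * (∑ k ∈ J, Proj k) := by
  -- each cross block vanishes
  have key : ∀ k ∈ I, ∀ k' ∈ J, Proj k * H * Proj k' = 0 := by
    intro k hk k' hk'
    have hne : k ≠ k' := by
      rintro rfl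
      exact (Finset.disjoint_left.mp hdisj hk) hk'
    have h0 := hzero k hk k' hk'
    have ht : (Proj k * H * Proj k' * H).trace = 0 := by
      have e1 : (Proj k' * Proj k * (H * H)).trace = 0 := by
        rw [horth k' k hne.symm]; simp
      have e2 : (Proj k * Proj k' * (H * H)).trace = 0 := by
        rw [horth k k' hne]; simp
      have expand : Proj k * Dsup H (Proj k')
          = Proj k * H * Proj k' * H
            - (1 / 2 : ℂ) • (Proj k * (H * H) * Proj k' + Proj k * Proj k' * (H * H)) := by
        simp only [Dsup, hH]
        rw [mul_sub, mul_smul_comm, mul_add]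
        ring_nf
        noncomm_ring
      rw [expand, Matrix.trace_sub, Matrix.trace_smul, Matrix.trace_add] at h0
      rw [Matrix.trace_mul_comm (Proj k * (H * H)) (Proj k')] at h0
      rw [← Matrix.mul_assoc] at h0
      rw [e1, e2] at h0
      simpa using h0
    apply aux_trace_zero
    have hct : (Proj k * H * Proj k')ᴴ = Proj k' * H * Proj k := by
      simp [Matrix.conjTranspose_mul, hH, hherm, Matrix.mul_assoc]
    rw [hct]
    have m1 : (Proj k' * H * Proj k) * (Proj k * H * Proj k')
        = (Proj k' * H * Proj k * H) * Proj k' := by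
      rw [show (Proj k' * H * Proj k) * (Proj k * H * Proj k')
          = Proj k' * H * (Proj k * Proj k) * H * Proj k' from by noncomm_ring, hidem]
    rw [m1, Matrix.trace_mul_comm]
    have m2 : Proj k' * (Proj k' * H * Proj k * H) = (Proj k' * H) * (Proj k * H) := by
      rw [show Proj k' * (Proj k' * H * Proj k * H)
          = (Proj k' * Proj k') * H * Proj k * H from by noncomm_ring, hidem]
      noncomm_ring
    rw [m2, Matrix.trace_mul_comm,
      show (Proj k * H) * (Proj k' * H) = Proj k * H * Proj k' * H from by noncomm_ring]
    exact ht
  set P := ∑ k ∈ I, Proj k with hP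
  set Q := ∑ k ∈ J, Proj k with hQ
  have hPQ : P * H * Q = 0 := by
    rw [hP, hQ, Finset.sum_mul, Finset.sum_mul]
    refine Finset.sum_eq_zero fun k hk => ?_
    rw [Finset.mul_sum]
    exact Finset.sum_eq_zero fun k' hk' => key k hk k' hk'
  have hQP : Q * H * P = 0 := by
    have := congrArg Matrix.conjTranspose hPQ
    simp only [Matrix.conjTranspose_mul, Matrix.conjTranspose_zero, hH] at this
    have hPh : Pᴴ = P := by
      simp [hP, Matrix.conjTranspose_sum, hherm]
    have hQh : Qᴴ = Q := by
      simp [hQ, Matrix.conjTranspose_sum, hherm]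
    rw [hPh, hQh, ← Matrix.mul_assoc] at this
    exact this
  have hsum : P + Q = 1 := by
    rw [hP, hQ, ← Finset.sum_union hdisj, hcover, hres]
  calc H = (P + Q) * H * (P + Q) := by rw [hsum]; simp
    _ = P * H * P + P * H * Q + (Q * H * P + Q * H * Q) := by noncomm_ring
    _ = P * H * P + Q * H * Q := by rw [hPQ, hQP]; simp
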